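/- Under Assumptions (A1), (A2), (A3) and the condition that E[XXᵀ] is positive definite, ζ_0 is the unique solution in ℝ^{k(p+1)} of the moment equation E[m(X,Y,ζ)] = 0; that is, E[m(X,Y,ζ_0)] = 0, and E[m(X,Y,ζ)] ≠ 0 for every ζ ≠ ζ_0. -/

import Mathlib

open MeasureTheory Filter Topology Matrix ProbabilityTheory

/-- The quantile score function `ψ_τ(u) = 1_{u<0} − τ` for `u ≠ 0`, `ψ_τ(0) = 0`. -/
noncomputable def psi (τ u : ℝ) : ℝ :=
  if u = 0 then 0 else (if u < 0 then 1 else 0) - τ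

/-- The quantile-regression estimating function `m(x,y,ζ)`. -/
noncomputable def mEst {p k : ℕ} (τs : Fin k → ℝ)
    (x : Fin (p+1) → ℝ) (y : ℝ) (ζ : Fin k → Fin (p+1) → ℝ) :
    Fin k → Fin (p+1) → ℝ :=
  fun d j => psi (τs d) (y - x ⬝ᵥ ζ d) * x j

lemma abs_psi_le (τ u : ℝ) : |psi τ u| ≤ 1 + |τ| := by
  unfold psi
  split_ifs with h1 h2
  · simp; positivity
  · calc |1 - τ| ≤ |(1:ℝ)| + |τ| := abs_sub _ _
      _ = 1 + |τ| := by norm_num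
  · simp

lemma measurable_psi (τ : ℝ) : Measurable (psi τ) := by
  unfold psi
  apply Measurable.ite (measurableSet_eq) measurable_const
  exact (Measurable.ite measurableSet_Iio measurable_const measurable_const).sub measurable_const

lemma integral_psi (m : Measure ℝ) [IsProbabilityMeasure m] (τ t : ℝ) (h0 : m {t} = 0) :
    ∫ y, psi τ (y - t) ∂m = (m (Set.Iio t)).toReal - τ := by
  have heq : (fun y => psi τ (y - t)) =
      fun y => (Set.Iio t).indicator (fun _ => (1:ℝ)) y - (({t} : Set ℝ)ᶜ).indicator (fun _ => τ) y := by
    funext y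
    rcases lt_trichotomy y t with h | h | h
    · have h1 : y - t < 0 := by linarith
      have h2 : y - t ≠ 0 := by intro hc; linarith [sub_eq_zero.mp hc]
      simp [psi, h1, h2, Set.indicator_of_mem (Set.mem_Iio.mpr h),
        Set.indicator_of_mem (by simp [ne_of_lt h] : y ∈ ({t}ᶜ : Set ℝ))]
    · subst h; simp [psi]
    · have h1 : ¬ (y - t < 0) := by linarith
      have h2 : y - t ≠ 0 := by intro hc; linarith [sub_eq_zero.mp hc]
      simp [psi, h1, h2, Set.indicator_of_notMem (by simp [h.le] : y ∉ Set.Iio t),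
        Set.indicator_of_mem (by simp [(ne_of_gt h)] : y ∈ ({t}ᶜ : Set ℝ))]
  rw [heq, integral_sub ((integrable_const (1:ℝ)).indicator measurableSet_Iio)
    ((integrable_const τ).indicator (measurableSet_singleton t).compl),
    integral_indicator_const _ measurableSet_Iio,
    integral_indicator_const _ (measurableSet_singleton t).compl]
  have : m ({t}ᶜ) = 1 := by
    rw [measure_compl (measurableSet_singleton t) (measure_ne_top m _), h0]
    simp
  simp only [measureReal_def]
  rw [this]
  simp

lemma cdf_ae_eq {p : ℕ} {Ω : Type} [MeasurableSpace Ω] (μ : Measure Ω) [IsProbabilityMeasure μ]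
    (X : Ω → (Fin (p+1) → ℝ)) (Y : Ω → ℝ) (hX : Measurable X) (hY : Measurable Y)
    (𝒳 : Set (Fin (p+1) → ℝ)) (hsupp : ∀ᵐ ω ∂μ, X ω ∈ 𝒳)
    (F : (Fin (p+1) → ℝ) → ℝ → ℝ)
    (hF : ∀ t : ℝ, (fun ω => F (X ω) t)
        =ᵐ[μ] μ[Set.indicator {ω | Y ω ≤ t} (fun _ => (1:ℝ)) |
              MeasurableSpace.comap X inferInstance])
    (hFc : ∀ x ∈ 𝒳, Continuous (F x)) :
    ∀ᵐ ω ∂μ, ∀ t : ℝ,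
      ((condDistrib Y X μ (X ω)) (Set.Iio t)).toReal = F (X ω) t ∧
      ((condDistrib Y X μ (X ω)) (Set.Iic t)).toReal = F (X ω) t ∧
      (condDistrib Y X μ (X ω)) {t} = 0 := by
  have hq : ∀ q : ℚ, ∀ᵐ ω ∂μ,
      ((condDistrib Y X μ (X ω)) (Set.Iic (q:ℝ))).toReal = F (X ω) q := by
    intro q
    have h1 := condDistrib_ae_eq_condExp (μ := μ) hX hY (measurableSet_Iic (a := (q:ℝ)))
    have h2 := hF (q:ℝ)
    have hset : Y ⁻¹' (Set.Iic (q:ℝ)) = {ω | Y ω ≤ (q:ℝ)} := rfl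
    rw [hset] at h1
    filter_upwards [h1, h2] with ω e1 e2
    rw [← measureReal_def, e1, e2]
  rw [← ae_all_iff] at hq
  filter_upwards [hq, hsupp] with ω hqω hx
  intro t
  set m := condDistrib Y X μ (X ω) with hm
  haveI : IsProbabilityMeasure m := by rw [hm]; infer_instance
  set x := X ω
  have hc : Continuous (F x) := hFc x hx
  have hlex : ∀ n : ℕ, ∃ q : ℚ, t - 1/(n+1) < (q:ℝ) ∧ (q:ℝ) < t := by
    intro n
    have hp : (0:ℝ) < 1/(n+1) := by positivity
    exact exists_rat_btwn (by linarith)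
  choose l hl1 hl2 using hlex
  have huex : ∀ n : ℕ, ∃ q : ℚ, t < (q:ℝ) ∧ (q:ℝ) < t + 1/(n+1) := by
    intro n
    have hp : (0:ℝ) < 1/(n+1) := by positivity
    exact exists_rat_btwn (by linarith)
  choose u hu1 hu2 using huex
  have hone : Tendsto (fun n : ℕ => 1/((n:ℝ)+1)) atTop (𝓝 0) := tendsto_one_div_add_atTop_nhds_zero_nat
  have htl : Tendsto (fun n => (l n : ℝ)) atTop (𝓝 t) := by
    apply tendsto_of_tendsto_of_tendsto_of_le_of_le (g := fun n : ℕ => t - 1/((n:ℝ)+1))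
      (h := fun _ : ℕ => t)
    · simpa using (tendsto_const_nhds (x := t)).sub hone
    · exact tendsto_const_nhds
    · exact fun n => (hl1 n).le
    · exact fun n => (hl2 n).le
  have htu : Tendsto (fun n => (u n : ℝ)) atTop (𝓝 t) := by
    apply tendsto_of_tendsto_of_tendsto_of_le_of_le (g := fun _ : ℕ => t)
      (h := fun n : ℕ => t + 1/((n:ℝ)+1))
    · exact tendsto_const_nhds
    · simpa using (tendsto_const_nhds (x := t)).add hone
    · exact fun n => (hu1 n).le
    · exact fun n => (hu2 n).le
  have hFl : Tendsto (fun n => F x (l n)) atTop (𝓝 (F x t)) := (hc.tendsto t).comp htl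
  have hFu : Tendsto (fun n => F x (u n)) atTop (𝓝 (F x t)) := (hc.tendsto t).comp htu
  have b1 : ∀ n, F x (l n) ≤ (m (Set.Iio t)).toReal := by
    intro n
    rw [← hqω (l n)]
    exact ENNReal.toReal_mono (measure_ne_top m _)
      (measure_mono (Set.Iic_subset_Iio.mpr (hl2 n)))
  have b2 : (m (Set.Iio t)).toReal ≤ (m (Set.Iic t)).toReal :=
    ENNReal.toReal_mono (measure_ne_top m _) (measure_mono Set.Iio_subset_Iic_self)
  have b3 : ∀ n, (m (Set.Iic t)).toReal ≤ F x (u n) := by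
    intro n
    rw [← hqω (u n)]
    exact ENNReal.toReal_mono (measure_ne_top m _)
      (measure_mono (Set.Iic_subset_Iic.mpr (hu1 n).le))
  have g1 : F x t ≤ (m (Set.Iio t)).toReal := le_of_tendsto hFl (Eventually.of_forall b1)
  have g2 : (m (Set.Iic t)).toReal ≤ F x t := ge_of_tendsto hFu (Eventually.of_forall b3)
  have e1 : (m (Set.Iio t)).toReal = F x t := le_antisymm (b2.trans g2) g1
  have e2 : (m (Set.Iic t)).toReal = F x t := le_antisymm g2 (g1.trans b2)
  refine ⟨e1, e2, ?_⟩
  have hmm : m (Set.Iic t) = m (Set.Iio t) :=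
    ((ENNReal.toReal_eq_toReal_iff' (measure_ne_top m _) (measure_ne_top m _)).mp (by rw [e1, e2]))
  have hsplit : m (Set.Iic t) = m (Set.Iio t) + m {t} := by
    rw [← Set.Iio_union_right, measure_union (Set.disjoint_singleton_right.mpr (by simp))
      (measurableSet_singleton t)]
  have : m (Set.Iio t) + m {t} = m (Set.Iio t) + 0 := by
    rw [add_zero, ← hsplit, hmm]
  exact (ENNReal.add_right_inj (measure_ne_top m _)).mp this

lemma measurable_dot {p : ℕ} (b : Fin (p+1) → ℝ) :
    Measurable (fun x : Fin (p+1) → ℝ => x ⬝ᵥ b) := by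
  simp only [dotProduct]
  exact Finset.measurable_sum _ (fun i _ => (measurable_pi_apply i).mul measurable_const)

lemma reduce {p : ℕ} {Ω : Type} [MeasurableSpace Ω] (μ : Measure Ω) [IsProbabilityMeasure μ]
    (X : Ω → (Fin (p+1) → ℝ)) (Y : Ω → ℝ) (hX : Measurable X) (hY : Measurable Y)
    (F : (Fin (p+1) → ℝ) → ℝ → ℝ)
    (R : ℝ) (hR : ∀ᵐ ω ∂μ, ‖X ω‖ ≤ R)
    (hcdf : ∀ᵐ ω ∂μ, ∀ t : ℝ,
      ((condDistrib Y X μ (X ω)) (Set.Iio t)).toReal = F (X ω) t ∧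
      ((condDistrib Y X μ (X ω)) (Set.Iic t)).toReal = F (X ω) t ∧
      (condDistrib Y X μ (X ω)) {t} = 0)
    (b : Fin (p+1) → ℝ) (τ : ℝ) (j : Fin (p+1)) :
    ∫ ω, psi τ (Y ω - X ω ⬝ᵥ b) * X ω j ∂μ
      = ∫ ω, (F (X ω) (X ω ⬝ᵥ b) - τ) * X ω j ∂μ := by
  set κ := condDistrib Y X μ with hκ
  set f : (Fin (p+1) → ℝ) × ℝ → ℝ := fun z => psi τ (z.2 - z.1 ⬝ᵥ b) * z.1 j with hf
  have meas1 : Measurable f :=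
    ((measurable_psi τ).comp (measurable_snd.sub ((measurable_dot b).comp measurable_fst))).mul
      ((measurable_pi_apply j).comp measurable_fst)
  have hXY : AEMeasurable (fun ω => (X ω, Y ω)) μ := (hX.prodMk hY).aemeasurable
  haveI : IsProbabilityMeasure (μ.map fun ω => (X ω, Y ω)) := Measure.isProbabilityMeasure_map hXY
  have hbound : ∀ᵐ ω ∂μ, ‖psi τ (Y ω - X ω ⬝ᵥ b) * X ω j‖ ≤ (1 + |τ|) * R := by
    filter_upwards [hR] with ω hRω
    rw [norm_mul]
    have h1 : ‖psi τ (Y ω - X ω ⬝ᵥ b)‖ ≤ 1 + |τ| := abs_psi_le τ _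
    have h2 : ‖X ω j‖ ≤ R := (norm_le_pi_norm (X ω) j).trans hRω
    exact mul_le_mul h1 h2 (norm_nonneg _) (by positivity)
  have hint1 : Integrable (fun ω => psi τ (Y ω - X ω ⬝ᵥ b) * X ω j) μ :=
    Integrable.mono' (integrable_const _)
      (meas1.comp (hX.prodMk hY)).aestronglyMeasurable hbound
  have hfint : Integrable f (μ.map fun ω => (X ω, Y ω)) := by
    rw [integrable_map_measure meas1.aestronglyMeasurable hXY]
    exact hint1
  have hcomp : μ.map X ⊗ₘ κ = μ.map (fun ω => (X ω, Y ω)) := by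
    rw [hκ]; exact compProd_map_condDistrib hY.aemeasurable
  have step1 : ∫ ω, psi τ (Y ω - X ω ⬝ᵥ b) * X ω j ∂μ
      = ∫ z, f z ∂(μ.map fun ω => (X ω, Y ω)) :=
    (integral_map hXY meas1.aestronglyMeasurable).symm
  have step2 : ∫ z, f z ∂(μ.map fun ω => (X ω, Y ω))
      = ∫ x, ∫ y, f (x, y) ∂(κ x) ∂(μ.map X) := by
    rw [← hcomp] at hfint ⊢
    exact Measure.integral_compProd hfint
  have step3 : ∫ x, ∫ y, f (x, y) ∂(κ x) ∂(μ.map X)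
      = ∫ ω, ∫ y, f (X ω, y) ∂(κ (X ω)) ∂μ :=
    integral_map hX.aemeasurable
      (MeasureTheory.AEStronglyMeasurable.integral_condDistrib_map hY.aemeasurable
        meas1.aestronglyMeasurable)
  have step4 : ∫ ω, ∫ y, f (X ω, y) ∂(κ (X ω)) ∂μ
      = ∫ ω, (F (X ω) (X ω ⬝ᵥ b) - τ) * X ω j ∂μ := by
    refine integral_congr_ae ?_
    filter_upwards [hcdf] with ω hω
    haveI : IsProbabilityMeasure (κ (X ω)) := inferInstance
    have : ∫ y, f (X ω, y) ∂(κ (X ω))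
        = (∫ y, psi τ (y - X ω ⬝ᵥ b) ∂(κ (X ω))) * X ω j := by
      rw [← integral_mul_const]
    rw [this, integral_psi _ τ _ (hω (X ω ⬝ᵥ b)).2.2, (hω (X ω ⬝ᵥ b)).1]
  rw [step1, step2, step3, step4]

theorem stmt3 {p k : ℕ} (τs : Fin k → ℝ) (hτ : ∀ d, τs d ∈ Set.Ioo (0:ℝ) 1)
    (hτmono : StrictMono τs)
    {Ω : Type} [MeasurableSpace Ω] (μ : Measure Ω) [IsProbabilityMeasure μ]
    (X : Ω → (Fin (p+1) → ℝ)) (Y : Ω → ℝ)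
    (hX : Measurable X) (hY : Measurable Y)
    (𝒳 : Set (Fin (p+1) → ℝ))
    -- (A1)
    (hXbdd : Bornology.IsBounded 𝒳)
    (hsupp : ∀ᵐ ω ∂μ, X ω ∈ 𝒳)
    (hone : ∀ x ∈ 𝒳, x 0 = 1)
    -- F is the conditional cdf of Y given X
    (F : (Fin (p+1) → ℝ) → ℝ → ℝ)
    (hFmeas : Measurable (Function.uncurry F))
    (hF : ∀ t : ℝ, (fun ω => F (X ω) t)
        =ᵐ[μ] μ[Set.indicator {ω | Y ω ≤ t} (fun _ => (1:ℝ)) |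
              MeasurableSpace.comap X inferInstance])
    -- (A2)
    (hF2 : ∀ x ∈ 𝒳, ContDiff ℝ 2 (F x))
    (hFbdd : ∀ K : Set ℝ, IsCompact K → ∃ C, ∀ x ∈ 𝒳, ∀ t ∈ K,
        |F x t| ≤ C ∧ |deriv (F x) t| ≤ C ∧ |deriv (deriv (F x)) t| ≤ C)
    -- the true parameter: F_x(xᵀβ₀(τ_d)) = τ_d on 𝒳
    (ζ0 : Fin k → Fin (p+1) → ℝ)
    (hζ0 : ∀ x ∈ 𝒳, ∀ d : Fin k, F x (x ⬝ᵥ ζ0 d) = τs d)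
    -- (A3): the conditional density is positive near the τ_d-th conditional quantile
    (hA3 : ∀ x ∈ 𝒳, ∀ d : Fin k, ∀ᶠ t in 𝓝 (x ⬝ᵥ ζ0 d), 0 < deriv (F x) t)
    -- E[XXᵀ] is positive definite
    (hXX : (Matrix.of fun j l : Fin (p+1) => ∫ ω, X ω j * X ω l ∂μ).PosDef) :
    -- ζ₀ is the unique solution of E[m(X,Y,ζ)] = 0
    (∫ ω, mEst τs (X ω) (Y ω) ζ0 ∂μ) = 0 ∧
    ∀ ζ : Fin k → Fin (p+1) → ℝ, ζ ≠ ζ0 →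
      (∫ ω, mEst τs (X ω) (Y ω) ζ ∂μ) ≠ 0 := by
  classical
  obtain ⟨R0, hR0⟩ := hXbdd.exists_norm_le
  set R := max R0 0 with hRdef
  have hR : ∀ᵐ ω ∂μ, ‖X ω‖ ≤ R := hsupp.mono (fun ω h => (hR0 _ h).trans (le_max_left _ _))
  have hcdf := cdf_ae_eq μ X Y hX hY 𝒳 hsupp F hF (fun x hx => (hF2 x hx).continuous)
  -- measurability of components of mEst
  have hmeasComp : ∀ (b : Fin (p+1) → ℝ) (τ : ℝ) (j : Fin (p+1)),
      Measurable (fun ω => psi τ (Y ω - X ω ⬝ᵥ b) * X ω j) :=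
    fun b τ j => ((measurable_psi τ).comp (hY.sub ((measurable_dot b).comp hX))).mul
      ((measurable_pi_apply j).comp hX)
  have hτabs : ∀ d, |τs d| ≤ 1 := fun d => by
    have := hτ d
    rw [abs_of_pos this.1]
    exact this.2.le
  -- integrability of each component of mEst
  have hintComp : ∀ (ζ : Fin k → Fin (p+1) → ℝ) (d : Fin k) (j : Fin (p+1)),
      Integrable (fun ω => psi (τs d) (Y ω - X ω ⬝ᵥ ζ d) * X ω j) μ := by
    intro ζ d j
    refine Integrable.mono' (integrable_const (2 * R)) (hmeasComp _ _ _).aestronglyMeasurable ?_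
    filter_upwards [hR] with ω hRω
    rw [norm_mul]
    have h1 : ‖psi (τs d) (Y ω - X ω ⬝ᵥ ζ d)‖ ≤ 2 := by
      refine (abs_psi_le _ _).trans ?_
      linarith [hτabs d]
    have h2 : ‖X ω j‖ ≤ R := (norm_le_pi_norm (X ω) j).trans hRω
    exact mul_le_mul h1 h2 (norm_nonneg _) (by norm_num)
  -- integrability of the vector-valued mEst
  have hintVec : ∀ ζ : Fin k → Fin (p+1) → ℝ,
      Integrable (fun ω => mEst τs (X ω) (Y ω) ζ) μ := by
    intro ζ
    have hmeas : Measurable (fun ω => mEst τs (X ω) (Y ω) ζ) := by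
      apply measurable_pi_lambda
      intro d
      apply measurable_pi_lambda
      intro j
      exact hmeasComp (ζ d) (τs d) j
    refine Integrable.mono' (integrable_const (2 * R)) hmeas.aestronglyMeasurable ?_
    filter_upwards [hR] with ω hRω
    have h3 : (0:ℝ) ≤ R := le_max_right _ _
    rw [pi_norm_le_iff_of_nonneg (by positivity)]
    intro d
    rw [pi_norm_le_iff_of_nonneg (by positivity)]
    intro j
    simp only [mEst]
    rw [norm_mul]
    have h1 : ‖psi (τs d) (Y ω - X ω ⬝ᵥ ζ d)‖ ≤ 2 := by
      refine (abs_psi_le _ _).trans ?_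
      linarith [hτabs d]
    have h2 : ‖X ω j‖ ≤ R := (norm_le_pi_norm (X ω) j).trans hRω
    exact mul_le_mul h1 h2 (norm_nonneg _) (by norm_num)
  -- component formula for the vector integral
  have happly : ∀ (ζ : Fin k → Fin (p+1) → ℝ) (d : Fin k) (j : Fin (p+1)),
      (∫ ω, mEst τs (X ω) (Y ω) ζ ∂μ) d j
        = ∫ ω, psi (τs d) (Y ω - X ω ⬝ᵥ ζ d) * X ω j ∂μ := by
    intro ζ d j
    have h1 := (ContinuousLinearMap.proj (R := ℝ)
      (φ := fun _ : Fin k => Fin (p+1) → ℝ) d).integral_comp_comm (hintVec ζ)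
    have hintd : Integrable (fun ω => mEst τs (X ω) (Y ω) ζ d) μ :=
      (ContinuousLinearMap.proj (R := ℝ)
        (φ := fun _ : Fin k => Fin (p+1) → ℝ) d).integrable_comp (hintVec ζ)
    have h2 := (ContinuousLinearMap.proj (R := ℝ)
      (φ := fun _ : Fin (p+1) => ℝ) j).integral_comp_comm hintd
    simp only [ContinuousLinearMap.proj_apply] at h1 h2
    rw [← h1, ← h2]
    rfl
  -- component reduction
  have hred : ∀ (ζ : Fin k → Fin (p+1) → ℝ) (d : Fin k) (j : Fin (p+1)),
      ∫ ω, psi (τs d) (Y ω - X ω ⬝ᵥ ζ d) * X ω j ∂μ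
        = ∫ ω, (F (X ω) (X ω ⬝ᵥ ζ d) - τs d) * X ω j ∂μ :=
    fun ζ d j => reduce μ X Y hX hY F R hR hcdf (ζ d) (τs d) j
  constructor
  · -- E[m(X,Y,ζ0)] = 0
    funext d j
    show (∫ ω, mEst τs (X ω) (Y ω) ζ0 ∂μ) d j = 0
    rw [happly, hred]
    rw [show (0:ℝ) = ∫ (_ : Ω), (0:ℝ) ∂μ by simp]
    refine integral_congr_ae ?_
    filter_upwards [hsupp] with ω hx
    rw [hζ0 _ hx d, sub_self, zero_mul]
  · -- uniqueness
    intro ζ hne hzero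
    obtain ⟨d, hd⟩ : ∃ d, ζ d ≠ ζ0 d := by
      by_contra hc
      push_neg at hc
      exact hne (funext hc)
    set δ : Fin (p+1) → ℝ := ζ d - ζ0 d with hδdef
    have hδ : δ ≠ 0 := sub_ne_zero.mpr hd
    set g : Ω → ℝ := fun ω => F (X ω) (X ω ⬝ᵥ ζ d) - τs d with hgdef
    have hgmeas : Measurable g := by
      have : Measurable (fun ω => F (X ω) (X ω ⬝ᵥ ζ d)) :=
        hFmeas.comp (hX.prodMk ((measurable_dot (ζ d)).comp hX))
      exact this.sub measurable_const
    have hFrange : ∀ᵐ ω ∂μ, ∀ t : ℝ, 0 ≤ F (X ω) t ∧ F (X ω) t ≤ 1 := by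
      filter_upwards [hcdf] with ω hω
      intro t
      rw [← (hω t).1]
      constructor
      · exact ENNReal.toReal_nonneg
      · haveI : IsProbabilityMeasure (condDistrib Y X μ (X ω)) := inferInstance
        have := prob_le_one (μ := condDistrib Y X μ (X ω)) (s := Set.Iio t)
        simpa using ENNReal.toReal_mono ENNReal.one_ne_top this
    have hgbdd : ∀ᵐ ω ∂μ, ‖g ω‖ ≤ 2 := by
      filter_upwards [hFrange] with ω hω
      have h1 := (hω (X ω ⬝ᵥ ζ d)).1
      have h2 := (hω (X ω ⬝ᵥ ζ d)).2
      have := hτabs d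
      rw [Real.norm_eq_abs, abs_le]
      constructor <;> [skip; skip] <;> cases' abs_le.mp this with hl hr <;> simp only [hgdef] <;> nlinarith
    -- each component moment vanishes
    have hcomp0 : ∀ j, ∫ ω, g ω * X ω j ∂μ = 0 := by
      intro j
      have h1 : (∫ ω, mEst τs (X ω) (Y ω) ζ ∂μ) d j = 0 := by rw [hzero]; rfl
      rw [happly, hred] at h1
      rw [← h1]
    -- integrability
    have hIg : ∀ j, Integrable (fun ω => g ω * X ω j) μ := by
      intro j
      refine Integrable.mono' (integrable_const (2 * R))
        (hgmeas.mul ((measurable_pi_apply j).comp hX)).aestronglyMeasurable ?_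
      filter_upwards [hR, hgbdd] with ω h1 h2
      rw [norm_mul]
      have h3 : ‖X ω j‖ ≤ R := (norm_le_pi_norm (X ω) j).trans h1
      exact mul_le_mul h2 h3 (norm_nonneg _) (by norm_num)
    -- ∫ g · (X ⬝ δ) = 0
    have hsum : ∫ ω, g ω * (X ω ⬝ᵥ δ) ∂μ = 0 := by
      have expand : ∀ ω, g ω * (X ω ⬝ᵥ δ) = ∑ j, (g ω * X ω j) * δ j := by
        intro ω
        simp only [dotProduct, Finset.mul_sum]
        refine Finset.sum_congr rfl fun j _ => by ring
      rw [show (fun ω => g ω * (X ω ⬝ᵥ δ)) = fun ω => ∑ j, (g ω * X ω j) * δ j from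
        funext expand]
      rw [integral_finset_sum _ (fun j _ => (hIg j).mul_const (δ j))]
      refine Finset.sum_eq_zero fun j _ => ?_
      rw [integral_mul_const, hcomp0 j, zero_mul]
    -- positivity a.e.
    have hpos : ∀ᵐ ω ∂μ, 0 ≤ g ω * (X ω ⬝ᵥ δ) ∧
        (X ω ⬝ᵥ δ ≠ 0 → 0 < g ω * (X ω ⬝ᵥ δ)) := by
      filter_upwards [hsupp, hcdf] with ω hx hω
      set x := X ω
      set t0 := x ⬝ᵥ ζ0 d with ht0
      set t1 := x ⬝ᵥ ζ d with ht1
      have hdot : x ⬝ᵥ δ = t1 - t0 := by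
        simp only [hδdef, dotProduct_sub, ht0, ht1]
      have hmono : ∀ s t : ℝ, s ≤ t → F x s ≤ F x t := by
        intro s t hst
        rw [← (hω s).1, ← (hω t).1]
        exact ENNReal.toReal_mono (measure_ne_top _ _)
          (measure_mono (Set.Iio_subset_Iio hst))
      have hgω : g ω = F x t1 - F x t0 := by
        rw [hgdef, ← hζ0 x hx d]
      obtain ⟨ε, hε, hball⟩ := Metric.eventually_nhds_iff.mp (hA3 x hx d)
      have hcont : Continuous (F x) := (hF2 x hx).continuous
      rcases lt_trichotomy t0 t1 with hlt | heq | hgt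
      · -- t0 < t1 : strict increase
        set s := min t1 (t0 + ε/2) with hs
        have hs1 : t0 < s := lt_min hlt (by linarith)
        have hs2 : s ≤ t1 := min_le_left _ _
        have hsm : StrictMonoOn (F x) (Set.Icc t0 s) := by
          apply strictMonoOn_of_deriv_pos (convex_Icc t0 s) hcont.continuousOn
          intro u hu
          rw [interior_Icc] at hu
          refine hball ?_
          rw [Real.dist_eq, abs_lt]
          have := hu.1; have := hu.2
          have hs3 : s ≤ t0 + ε/2 := min_le_right _ _
          constructor <;> nlinarith
        have h1 : F x t0 < F x s :=
          hsm (Set.left_mem_Icc.mpr (by linarith)) (Set.right_mem_Icc.mpr (by linarith)) hs1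
        have h2 : F x s ≤ F x t1 := hmono _ _ hs2
        have hg : 0 < g ω := by rw [hgω]; linarith
        have hdpos : 0 < x ⬝ᵥ δ := by rw [hdot]; linarith
        exact ⟨le_of_lt (mul_pos hg hdpos), fun _ => mul_pos hg hdpos⟩
      · -- equal
        have : x ⬝ᵥ δ = 0 := by rw [hdot, heq, sub_self]
        rw [this, mul_zero]
        exact ⟨le_refl 0, fun hc => absurd rfl hc⟩
      · -- t1 < t0 : strict decrease
        set s := max t1 (t0 - ε/2) with hs
        have hs1 : s < t0 := max_lt hgt (by linarith)
        have hs2 : t1 ≤ s := le_max_left _ _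
        have hsm : StrictMonoOn (F x) (Set.Icc s t0) := by
          apply strictMonoOn_of_deriv_pos (convex_Icc s t0) hcont.continuousOn
          intro u hu
          rw [interior_Icc] at hu
          refine hball ?_
          rw [Real.dist_eq, abs_lt]
          have := hu.1; have := hu.2
          have hs3 : t0 - ε/2 ≤ s := le_max_right _ _
          constructor <;> nlinarith
        have h1 : F x s < F x t0 :=
          hsm (Set.left_mem_Icc.mpr (by linarith)) (Set.right_mem_Icc.mpr (by linarith)) hs1
        have h2 : F x t1 ≤ F x s := hmono _ _ hs2
        have hg : g ω < 0 := by rw [hgω]; linarith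
        have hdneg : x ⬝ᵥ δ < 0 := by rw [hdot]; linarith
        have hp : 0 < g ω * (x ⬝ᵥ δ) := mul_pos_of_neg_of_neg hg hdneg
        exact ⟨hp.le, fun _ => hp⟩
    -- integrability of the product
    have hIq : Integrable (fun ω => g ω * (X ω ⬝ᵥ δ)) μ := by
      refine Integrable.mono' (integrable_const (2 * (R * ∑ j, |δ j|)))
        (hgmeas.mul ((measurable_dot δ).comp hX)).aestronglyMeasurable ?_
      filter_upwards [hR, hgbdd] with ω h1 h2
      rw [norm_mul]
      have h3 : ‖X ω ⬝ᵥ δ‖ ≤ R * ∑ j, |δ j| := by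
        rw [Real.norm_eq_abs]
        calc |X ω ⬝ᵥ δ| ≤ ∑ j, |X ω j * δ j| := by
              simp only [dotProduct]
              exact Finset.abs_sum_le_sum_abs _ _
          _ ≤ ∑ j, R * |δ j| := by
              refine Finset.sum_le_sum fun j _ => ?_
              rw [abs_mul]
              refine mul_le_mul_of_nonneg_right ?_ (abs_nonneg _)
              exact (norm_le_pi_norm (X ω) j).trans h1
          _ = R * ∑ j, |δ j| := by rw [Finset.mul_sum]
      have h4 : (0:ℝ) ≤ R * ∑ j, |δ j| := by
        have : (0:ℝ) ≤ R := le_max_right _ _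
        positivity
      exact mul_le_mul h2 h3 (norm_nonneg _) (by norm_num)
    -- the product is a.e. zero, hence X ⬝ δ = 0 a.e.
    have hq0 : (fun ω => g ω * (X ω ⬝ᵥ δ)) =ᵐ[μ] 0 :=
      (integral_eq_zero_iff_of_nonneg_ae (hpos.mono fun ω h => h.1) hIq).mp hsum
    have hXδ0 : ∀ᵐ ω ∂μ, X ω ⬝ᵥ δ = 0 := by
      filter_upwards [hq0, hpos] with ω h1 h2
      by_contra hc
      have := h2.2 hc
      rw [Pi.zero_apply] at h1
      linarith [this, h1.le, h1.ge]
    -- quadratic form vanishes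
    have hIXX : ∀ j l : Fin (p+1), Integrable (fun ω => X ω j * X ω l) μ := by
      intro j l
      refine Integrable.mono' (integrable_const (R * R))
        (((measurable_pi_apply j).comp hX).mul
          ((measurable_pi_apply l).comp hX)).aestronglyMeasurable ?_
      filter_upwards [hR] with ω h1
      rw [norm_mul]
      exact mul_le_mul ((norm_le_pi_norm (X ω) j).trans h1)
        ((norm_le_pi_norm (X ω) l).trans h1) (norm_nonneg _)
        ((norm_nonneg _).trans ((norm_le_pi_norm (X ω) j).trans h1))
    have hquad : δ ⬝ᵥ ((Matrix.of fun j l : Fin (p+1) => ∫ ω, X ω j * X ω l ∂μ) *ᵥ δ)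
        = ∫ ω, (X ω ⬝ᵥ δ) ^ 2 ∂μ := by
      have : ∀ ω, (X ω ⬝ᵥ δ) ^ 2 = ∑ j, ∑ l, δ j * (X ω j * X ω l * δ l) := by
        intro ω
        simp only [dotProduct, sq, Finset.sum_mul_sum]
        rw [Finset.sum_comm]
        refine Finset.sum_congr rfl fun j _ => Finset.sum_congr rfl fun l _ => by ring
      rw [show (fun ω => (X ω ⬝ᵥ δ)^2) = fun ω => ∑ j, ∑ l, δ j * (X ω j * X ω l * δ l) from
        funext this]
      rw [integral_finset_sum _ (fun j _ => by
        exact integrable_finset_sum _ (fun l _ => (((hIXX j l).mul_const (δ l)).const_mul (δ j))))]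
      simp only [dotProduct, Matrix.mulVec, Matrix.of_apply]
      refine Finset.sum_congr rfl fun j _ => ?_
      rw [integral_finset_sum _ (fun l _ => ((hIXX j l).mul_const (δ l)).const_mul (δ j))]
      rw [Finset.mul_sum]
      refine Finset.sum_congr rfl fun l _ => ?_
      rw [integral_const_mul, integral_mul_const]
    have hzeroQ : ∫ ω, (X ω ⬝ᵥ δ) ^ 2 ∂μ = 0 := by
      rw [show (0:ℝ) = ∫ (_ : Ω), (0:ℝ) ∂μ by simp]
      refine integral_congr_ae ?_
      filter_upwards [hXδ0] with ω h
      rw [h]; norm_num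
    have hposQ := hXX.dotProduct_mulVec_pos hδ
    rw [show star δ = δ from rfl] at hposQ
    rw [hquad, hzeroQ] at hposQ
    exact lt_irrefl 0 hposQ
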